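/- arXiv:2307.11001 — 3 statements merged into one kernel-verified Lean document; each statement's English description precedes it below -/
import Mathlib

section
/- Let T be a category, S ⊆ T a wide subcategory, and suppose S satisfies left-cancellability and contains all isomorphisms. Suppose also there exist morphisms α : A → B and β : B → A in T with β ∘ α = id_A and α ∘ β ∈ S but α ∉ S. Then the left Kan extension functor ι_! : PSh(S) → PSh(T) along the inclusion ι : S ↪ T is not a monomorphism of categories; concretely, the colimit X in PSh(S) of the sequential diagram A →^{αβ} A →^{αβ} ⋯ satisfies ι_! X ≅ ι_!(y(B)) in PSh(T) even though X is not isomorphic to the representable presheaf y(B) in PSh(S). -/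
open CategoryTheory CategoryTheory.Limits

universe v u

namespace Stmt15Aux

variable {C : Type u} [Category.{v} C]

/-- Composing an `ofSequence` functor with a functor. -/
noncomputable def ofSequenceCompIso {D : Type*} [Category D] (G : C ⥤ D)
    {X : ℕ → C} (f : ∀ n, X n ⟶ X (n+1)) :
    Functor.ofSequence f ⋙ G ≅ Functor.ofSequence (fun n => G.map (f n)) where
  hom := NatTrans.ofSequence (fun n => 𝟙 _) (by intro n; simp; exact (Category.comp_id _).trans (Category.id_comp _).symm)
  inv := NatTrans.ofSequence (fun n => 𝟙 _) (by intro n; simp; exact (Category.comp_id _).trans (Category.id_comp _).symm)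
  hom_inv_id := by ext n; exact Category.comp_id _
  inv_hom_id := by ext n; exact Category.comp_id _

variable {A B : C} (e : B ⟶ B) (p : B ⟶ A) (i : A ⟶ B)
variable (hip : i ≫ p = 𝟙 A) (hpi : p ≫ i = e)

/-- The cocone on the constant-idempotent sequence whose apex is the retract. -/
noncomputable def splitCocone : Cocone (Functor.ofSequence (fun _ : ℕ => e)) where
  pt := A
  ι := NatTrans.ofSequence (fun _ => p) (by
    intro n
    simp only [Functor.ofSequence_map_homOfLE_succ, Functor.const_obj_obj,
      Functor.const_obj_map, Category.comp_id, ← hpi, Category.assoc, hip, Category.comp_id]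
    erw [Category.assoc, hip])

lemma splitCocone_app (n : ℕ) : (splitCocone e p i hip hpi).ι.app n = p := rfl

/-- A split idempotent's retract is the colimit of the constant sequence along it. -/
noncomputable def splitIsColimit : IsColimit (splitCocone e p i hip hpi) := by
  have he : e ≫ e = e := by rw [← hpi, Category.assoc, ← Category.assoc i p, hip,
    Category.id_comp]
  have hs : ∀ (s : Cocone (Functor.ofSequence (fun _ : ℕ => e))) (n : ℕ),
      e ≫ s.ι.app (n+1) = s.ι.app n := by
    intro s n
    have := s.ι.naturality (homOfLE (Nat.le_add_right n 1))
    simp [Functor.ofSequence_map_homOfLE_succ] at this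
    exact this
  have hs' : ∀ (s : Cocone (Functor.ofSequence (fun _ : ℕ => e))) (n : ℕ),
      e ≫ s.ι.app n = s.ι.app n := by
    intro s n
    conv_lhs => erw [← hs s n, ← Category.assoc, he]
    exact hs s n
  have hconst : ∀ (s : Cocone (Functor.ofSequence (fun _ : ℕ => e))) (n : ℕ),
      s.ι.app n = s.ι.app 0 := by
    intro s n
    induction n with
    | zero => rfl
    | succ n ih => rw [← ih, ← hs s n, hs' s (n+1)]
  exact
  { desc := fun s => i ≫ s.ι.app 0
    fac := fun s n => by
      rw [splitCocone_app]
      erw [← Category.assoc, hpi, hs' s 0, hconst s n]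
    uniq := fun s m hm => by
      show m = i ≫ s.ι.app 0
      have := hm 0
      rw [splitCocone_app] at this
      rw [← this]
      erw [← Category.assoc, hip, Category.id_comp] }

lemma ofSequence_map_comp_self {C : Type*} [Category C] {B : C} (e : B ⟶ B)
    (he : e ≫ e = e) {n k : ℕ} (f : n ⟶ k) :
    (Functor.ofSequence (fun _ : ℕ => e)).map f ≫ e = e := by
  obtain ⟨m, rfl⟩ := Nat.exists_eq_add_of_le (leOfHom f)
  obtain rfl := Subsingleton.elim f (homOfLE (Nat.le_add_right n m))
  induction m with
  | zero =>
      rw [Subsingleton.elim (homOfLE (Nat.le_add_right n 0)) (𝟙 n)]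
      simp
      exact Category.id_comp e
  | succ m ih =>
      rw [Subsingleton.elim (homOfLE (Nat.le_add_right n (m+1)))
        (homOfLE (Nat.le_add_right n m) ≫ homOfLE (Nat.le_add_right (n+m) 1)),
        Functor.map_comp]
      erw [Category.assoc, Functor.ofSequence_map_homOfLE_succ, he, ih]

end Stmt15Aux

open Stmt15Aux in
/-- Let `S ⊆ T` be a left-cancellable wide subcategory containing all isomorphisms, and
suppose there are `α : A ⟶ B`, `β : B ⟶ A` with `β ∘ α = id_A`, `α ∘ β ∈ S` but
`α ∉ S`.  Then the left Kan extension `ι_! : PSh(S) → PSh(T)` is not a monomorphism of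
categories: the colimit `X` in `PSh(S)` of the sequential diagram along the idempotent
`α ∘ β ∈ S` becomes, after applying `ι_!`, isomorphic to the image under `ι_!` of a
representable presheaf (namely the splitting object `A` of the idempotent, which is the
colimit of this diagram in `T`), even though `X` is not isomorphic to that representable
presheaf in `PSh(S)`. -/
theorem stmt_15 {T : Type u} [SmallCategory T] (S : MorphismProperty T) [S.IsMultiplicative]
    (hiso : ∀ {X Y : T} (f : X ⟶ Y), IsIso f → S f)
    (hcancel : ∀ {X Y Z : T} (f : X ⟶ Y) (g : Y ⟶ Z), S g → S (f ≫ g) → S f)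
    {A B : T} (α : A ⟶ B) (β : B ⟶ A) (h1 : α ≫ β = 𝟙 A) (h2 : S (β ≫ α)) (h3 : ¬ S α) :
    Nonempty
      ((wideSubcategoryInclusion S).op.lan.obj
          (colimit ((Functor.ofSequence (X := fun _ : ℕ => (⟨B⟩ : WideSubcategory S))
            (fun _ => (⟨β ≫ α, h2⟩ : ((⟨B⟩ : WideSubcategory S) ⟶ ⟨B⟩)))) ⋙ yoneda)) ≅
        (wideSubcategoryInclusion S).op.lan.obj
          (yoneda.obj (⟨A⟩ : WideSubcategory S))) ∧
    ¬ Nonempty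
      (colimit ((Functor.ofSequence (X := fun _ : ℕ => (⟨B⟩ : WideSubcategory S))
          (fun _ => (⟨β ≫ α, h2⟩ : ((⟨B⟩ : WideSubcategory S) ⟶ ⟨B⟩)))) ⋙ yoneda) ≅
        yoneda.obj (⟨A⟩ : WideSubcategory S)) := by
  constructor
  · let ι' := wideSubcategoryInclusion S
    let e : (⟨B⟩ : WideSubcategory S) ⟶ ⟨B⟩ := ⟨β ≫ α, h2⟩
    let F := Functor.ofSequence (X := fun _ : ℕ => (⟨B⟩ : WideSubcategory S)) (fun _ => e)
    let L : ((WideSubcategory S)ᵒᵖ ⥤ Type u) ⥤ (Tᵒᵖ ⥤ Type u) := ι'.op.lan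
    haveI : PreservesColimitsOfSize.{0,0} L :=
      (Functor.lanAdjunction ι'.op (Type u)).leftAdjoint_preservesColimits
    have hip : yoneda.map α ≫ yoneda.map β = 𝟙 (yoneda.obj A) := by
      rw [← yoneda.map_comp, h1, yoneda.map_id]
    have hpi : yoneda.map β ≫ yoneda.map α = yoneda.map (β ≫ α) := (yoneda.map_comp β α).symm
    refine ⟨?_⟩
    calc L.obj (colimit (F ⋙ yoneda))
        ≅ colimit ((F ⋙ yoneda) ⋙ L) := preservesColimitIso L _
      _ ≅ colimit (F ⋙ (ι' ⋙ yoneda)) := HasColimit.isoOfNatIso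
            (Functor.isoWhiskerLeft F (Functor.isoWhiskerLeft ι' uliftYonedaIsoYoneda.{u}.symm ≪≫
              Presheaf.compULiftYonedaIsoULiftYonedaCompLan.{u} ι' ≪≫
              Functor.isoWhiskerRight uliftYonedaIsoYoneda.{u} L).symm)
      _ ≅ colimit (Functor.ofSequence (fun _ : ℕ => yoneda.map (β ≫ α))) :=
            HasColimit.isoOfNatIso (ofSequenceCompIso (ι' ⋙ yoneda) (fun _ : ℕ => e))
      _ ≅ yoneda.obj A := colimit.isoColimitCocone
            ⟨_, splitIsColimit (yoneda.map (β ≫ α)) (yoneda.map β) (yoneda.map α) hip hpi⟩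
      _ ≅ L.obj (yoneda.obj (⟨A⟩ : WideSubcategory S)) :=
            (Functor.isoWhiskerLeft ι' uliftYonedaIsoYoneda.{u}.symm ≪≫
              Presheaf.compULiftYonedaIsoULiftYonedaCompLan.{u} ι' ≪≫
              Functor.isoWhiskerRight uliftYonedaIsoYoneda.{u} L).app (⟨A⟩ : WideSubcategory S)
  · rintro ⟨φ⟩
    let e : (⟨B⟩ : WideSubcategory S) ⟶ ⟨B⟩ := ⟨β ≫ α, h2⟩
    let F := Functor.ofSequence (X := fun _ : ℕ => (⟨B⟩ : WideSubcategory S)) (fun _ => e)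
    let D := F ⋙ yoneda
    have he : e ≫ e = e := WideSubcategory.hom_ext S (show (β ≫ α) ≫ β ≫ α = β ≫ α by
      rw [Category.assoc, ← Category.assoc α β, h1, Category.id_comp])
    -- the maps r n : ⟨B⟩ ⟶ ⟨A⟩
    let r : ∀ _ : ℕ, (⟨B⟩ : WideSubcategory S) ⟶ (⟨A⟩ : WideSubcategory S) :=
      fun n => yoneda.preimage (colimit.ι D n ≫ φ.hom)
    have hr : ∀ n, yoneda.map (r n) = colimit.ι D n ≫ φ.hom := fun n =>
      yoneda.map_preimage _
    have hstep : ∀ n, e ≫ r (n+1) = r n := by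
      intro n
      apply yoneda.map_injective
      have hD : D.map (homOfLE (Nat.le_add_right n 1)) = yoneda.map e := by
        show yoneda.map (F.map _) = yoneda.map e
        rw [Functor.ofSequence_map_homOfLE_succ]
        rfl
      have hw := colimit.w D (homOfLE (Nat.le_add_right n 1))
      rw [hD] at hw
      rw [yoneda.map_comp, hr, hr]
      erw [← Category.assoc, hw]
      rfl
    have hre : ∀ n, e ≫ r n = r n := by
      intro n
      conv_lhs => rw [← hstep n, ← Category.assoc, he]
      exact hstep n
    -- find the stage of the element corresponding to 𝟙 A
    let evA := (evaluation (WideSubcategory S)ᵒᵖ (Type u)).obj (Opposite.op (⟨A⟩ : WideSubcategory S))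
    have hcA : IsColimit (evA.mapCocone (colimit.cocone D)) :=
      isColimitOfPreserves evA (colimit.isColimit D)
    obtain ⟨n, i, hi⟩ := Types.jointly_surjective (D ⋙ evA) hcA
      (φ.inv.app (Opposite.op (⟨A⟩ : WideSubcategory S)) (𝟙 (⟨A⟩ : WideSubcategory S)))
    -- i : ⟨A⟩ ⟶ ⟨B⟩, hi : (colimit.ι D n).app _ i = φ.inv.app _ 𝟙
    have hi' : (colimit.ι D n).app (Opposite.op (⟨A⟩ : WideSubcategory S)) i
        = φ.inv.app (Opposite.op (⟨A⟩ : WideSubcategory S)) (𝟙 (⟨A⟩ : WideSubcategory S)) := hi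
    have happ : ∀ (m : ℕ) (z : (⟨A⟩ : WideSubcategory S) ⟶ ⟨B⟩),
        φ.hom.app (Opposite.op (⟨A⟩ : WideSubcategory S))
          ((colimit.ι D m).app (Opposite.op (⟨A⟩ : WideSubcategory S)) z) = z ≫ r m := by
      intro m z
      calc φ.hom.app _ ((colimit.ι D m).app _ z)
          = (colimit.ι D m ≫ φ.hom).app (Opposite.op (⟨A⟩ : WideSubcategory S)) z := rfl
        _ = (yoneda.map (r m)).app (Opposite.op (⟨A⟩ : WideSubcategory S)) z := by rw [hr]; rfl
        _ = z ≫ r m := rfl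
    have hir : i ≫ r n = 𝟙 (⟨A⟩ : WideSubcategory S) := by
      have h5 : φ.hom.app (Opposite.op (⟨A⟩ : WideSubcategory S))
          (φ.inv.app (Opposite.op (⟨A⟩ : WideSubcategory S)) (𝟙 (⟨A⟩ : WideSubcategory S)))
          = 𝟙 (⟨A⟩ : WideSubcategory S) := by
        rw [FunctorToTypes.inv_hom_id_app_apply]
      rw [← h5, ← hi', happ n i]
      rfl
    -- the same-stage equality in the colimit at object B
    have happB : ∀ (m : ℕ) (z : (⟨B⟩ : WideSubcategory S) ⟶ ⟨B⟩),
        φ.hom.app (Opposite.op (⟨B⟩ : WideSubcategory S))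
          ((colimit.ι D m).app (Opposite.op (⟨B⟩ : WideSubcategory S)) z) = z ≫ r m := by
      intro m z
      calc φ.hom.app _ ((colimit.ι D m).app _ z)
          = (colimit.ι D m ≫ φ.hom).app (Opposite.op (⟨B⟩ : WideSubcategory S)) z := rfl
        _ = (yoneda.map (r m)).app (Opposite.op (⟨B⟩ : WideSubcategory S)) z := by rw [hr]; rfl
        _ = z ≫ r m := rfl
    have hinj : Function.Injective (φ.hom.app (Opposite.op (⟨B⟩ : WideSubcategory S))) := by
      intro a b h
      have := congrArg (φ.inv.app (Opposite.op (⟨B⟩ : WideSubcategory S))) h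
      simpa [FunctorToTypes.hom_inv_id_app_apply] using this
    have hkey : (colimit.ι D n).app (Opposite.op (⟨B⟩ : WideSubcategory S)) (r n ≫ i)
        = (colimit.ι D n).app (Opposite.op (⟨B⟩ : WideSubcategory S)) (𝟙 (⟨B⟩ : WideSubcategory S)) := by
      apply hinj
      erw [happB n, happB n, Category.assoc, hir, Category.comp_id, Category.id_comp]
    -- use filteredness to get (r n ≫ i) ≫ F.map f = F.map f
    let evB := (evaluation (WideSubcategory S)ᵒᵖ (Type u)).obj (Opposite.op (⟨B⟩ : WideSubcategory S))
    have hcB : IsColimit (evB.mapCocone (colimit.cocone D)) :=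
      isColimitOfPreserves evB (colimit.isColimit D)
    have hkey2 : (evB.mapCocone (colimit.cocone D)).ι.app n (r n ≫ i)
        = (evB.mapCocone (colimit.cocone D)).ι.app n (𝟙 (⟨B⟩ : WideSubcategory S)) := hkey
    obtain ⟨k, f, g, hfg⟩ := (Types.FilteredColimit.isColimit_eq_iff (D ⋙ evB) hcB).mp hkey2
    obtain rfl : f = g := Subsingleton.elim f g
    have hfg' : (r n ≫ i) ≫ F.map f = 𝟙 _ ≫ F.map f := hfg
    have hw : F.map f ≫ e = e := ofSequence_map_comp_self e he f
    have hrie : (r n ≫ i) ≫ e = e := by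
      rw [← hw]
      erw [← Category.assoc, hfg', Category.id_comp]
      rfl
    -- now descend to T
    let u : B ⟶ A := (r n).1
    let v : A ⟶ B := i.1
    have hvu : v ≫ u = 𝟙 A := congrArg InducedWideCategory.Hom.hom hir
    have heu : (β ≫ α) ≫ u = u := congrArg InducedWideCategory.Hom.hom (hre n)
    have huv : (u ≫ v) ≫ β ≫ α = β ≫ α := congrArg InducedWideCategory.Hom.hom hrie
    have huvβ : u ≫ v ≫ β = β := by
      have := congrArg (fun z => z ≫ β) huv
      simp only [Category.assoc] at this
      rw [h1, Category.comp_id] at this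
      exact this
    have hiso' : IsIso (α ≫ u) := by
      refine ⟨v ≫ β, ?_, ?_⟩
      · rw [Category.assoc, ← Category.assoc u v, Category.assoc, huvβ, h1]
      · rw [Category.assoc, ← Category.assoc β α, heu, hvu]
    exact h3 (hcancel α u (r n).2 (hiso (α ≫ u) hiso'))
end

section
/- Let ι : S ↪ T be the inclusion of a wide subcategory with S left-cancellable and containing all isomorphisms. Then for every presheaf X on S and every object A of S, the canonical map X(A) → (ι*ι_!X)(A) induced by the unit of the adjunction ι_! ⊣ ι* is injective (a monomorphism); consequently ι_! : PSh(S) → PSh(T) is faithful. -/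
open CategoryTheory CategoryTheory.Limits

universe u

namespace Stmt16Aux

variable {T : Type u} [SmallCategory T] (S : MorphismProperty T) [S.IsMultiplicative]

open Classical in
noncomputable def myCocone
    (hcancel : ∀ {X Y Z : T} (f : X ⟶ Y) (g : Y ⟶ Z), S g → S (f ≫ g) → S f)
    (X : (WideSubcategory S)ᵒᵖ ⥤ Type u) (A : WideSubcategory S) :
    Cocone (CostructuredArrow.proj (wideSubcategoryInclusion S).op (Opposite.op A.obj) ⋙ X) where
  pt := Option (X.obj (Opposite.op A))
  ι := {
    app := fun g => TypeCat.ofHom (fun x =>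
      if h : S g.hom.unop then
        some (X.map (Quiver.Hom.op (⟨g.hom.unop, h⟩ : A ⟶ Opposite.unop g.left)) x)
      else none)
    naturality := by
      intro g₁ g₂ φ
      refine ConcreteCategory.hom_ext _ _ (fun x => ?_)
      have w := CostructuredArrow.w φ
      have w' : g₂.hom.unop ≫ (φ.left.unop).1 = g₁.hom.unop := congrArg Quiver.Hom.unop w
      dsimp
      by_cases h₂ : S g₂.hom.unop
      · have h₁ : S g₁.hom.unop := by
          rw [← w']; exact S.comp_mem _ _ h₂ (φ.left.unop).2
        refine (dif_pos h₂).trans (Eq.trans ?_ (dif_pos h₁).symm)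
        refine congrArg some ?_
        have he : φ.left ≫ Quiver.Hom.op (⟨g₂.hom.unop, h₂⟩ : A ⟶ Opposite.unop g₂.left)
            = Quiver.Hom.op (⟨g₁.hom.unop, h₁⟩ : A ⟶ Opposite.unop g₁.left) := by
          apply Quiver.Hom.unop_inj
          apply WideSubcategory.hom_ext
          exact w'
        exact (X.map_comp_apply _ _ x).symm.trans (types_congr_hom (congrArg X.map he) x)
      · have h₁ : ¬ S g₁.hom.unop := by
          intro h₁
          exact h₂ (hcancel _ _ (φ.left.unop).2 (w' ▸ h₁))
        refine (dif_neg h₂).trans (Eq.trans ?_ (dif_neg h₁).symm); rfl }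

lemma unit_injective
    (hcancel : ∀ {X Y Z : T} (f : X ⟶ Y) (g : Y ⟶ Z), S g → S (f ≫ g) → S f)
    (X : (WideSubcategory S)ᵒᵖ ⥤ Type u) (A : WideSubcategory S) :
    Function.Injective
      (((wideSubcategoryInclusion S).op.lanUnit.app X).app (Opposite.op A)) := by
  classical
  set L := (wideSubcategoryInclusion S).op with hL
  set c := myCocone S hcancel X A with hc
  have key : ∀ x : X.obj (Opposite.op A),
      colimit.desc _ c ((L.leftKanExtensionObjIsoColimit X (Opposite.op A.obj)).hom
        (((L.lanUnit.app X).app (Opposite.op A)) x)) = some x := by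
    intro x
    have h1 := L.leftKanExtensionUnit_leftKanExtensionObjIsoColimit_hom X (Opposite.op A)
    have h2 := types_congr_hom (congrArg (fun f => f ≫ colimit.desc _ c) h1) x
    simp only [types_comp_apply, colimit.ι_desc] at h2
    have h4 : colimit.desc _ c (colimit.ι
          (CostructuredArrow.proj L (L.obj (Opposite.op A)) ⋙ X)
          (CostructuredArrow.mk (𝟙 (L.obj (Opposite.op A)))) x)
        = c.ι.app (CostructuredArrow.mk (𝟙 (L.obj (Opposite.op A)))) x := by
      have h := colimit.ι_desc c (CostructuredArrow.mk (𝟙 (L.obj (Opposite.op A))))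
      exact types_congr_hom h x
    have h3 : c.ι.app (CostructuredArrow.mk (𝟙 (L.obj (Opposite.op A)))) x = some x := by
      have hid : S ((𝟙 (Opposite.op A.obj) : (_ : Tᵒᵖ) ⟶ _)).unop := by
        simpa using S.id_mem A.obj
      show (if h : S ((𝟙 (Opposite.op A.obj) : (_ : Tᵒᵖ) ⟶ _)).unop then _ else _) = _
      refine (dif_pos hid).trans ?_
      have heq : Quiver.Hom.op
          (⟨(CostructuredArrow.mk (𝟙 (L.obj (Opposite.op A)))).hom.unop, hid⟩ : A ⟶ A)
          = 𝟙 (Opposite.op A) := by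
        apply Quiver.Hom.unop_inj
        apply WideSubcategory.hom_ext
        exact unop_id
      exact congrArg some ((types_congr_hom (congrArg X.map heq) x).trans (by simp))
    exact h2.trans (h4.trans h3)
  intro x y hxy
  have := (key x).symm.trans (congrArg _ (congrArg _ hxy)) |>.trans (key y)
  exact Option.some_injective _ this

end Stmt16Aux

/-- Let `ι : S ↪ T` be the inclusion of a left-cancellable wide subcategory containing
all isomorphisms.  Then every unit component of the adjunction `ι_! ⊣ ι*` between
presheaf categories is injective in each degree; consequently the left Kan extension
`ι_! : PSh(S) → PSh(T)` is faithful. -/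
theorem stmt_16 {T : Type u} [SmallCategory T] (S : MorphismProperty T) [S.IsMultiplicative]
    (hiso : ∀ {X Y : T} (f : X ⟶ Y), IsIso f → S f)
    (hcancel : ∀ {X Y Z : T} (f : X ⟶ Y) (g : Y ⟶ Z), S g → S (f ≫ g) → S f) :
    (∀ (X : (WideSubcategory S)ᵒᵖ ⥤ Type u) (A : WideSubcategory S),
      Function.Injective
        ((((wideSubcategoryInclusion S).op.lanAdjunction (Type u)).unit.app X).app
          (Opposite.op A))) ∧
    Functor.Faithful ((wideSubcategoryInclusion S).op.lan :
      ((WideSubcategory S)ᵒᵖ ⥤ Type u) ⥤ (Tᵒᵖ ⥤ Type u)) := by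
  have inj : ∀ (X : (WideSubcategory S)ᵒᵖ ⥤ Type u) (A : WideSubcategory S),
      Function.Injective
        ((((wideSubcategoryInclusion S).op.lanAdjunction (Type u)).unit.app X).app
          (Opposite.op A)) := by
    intro X A
    rw [Functor.lanAdjunction_unit]
    exact Stmt16Aux.unit_injective S hcancel X A
  refine ⟨inj, ?_⟩
  constructor
  intro X Y f g h
  ext B x
  apply inj Y B.unop
  have hn1 := ((wideSubcategoryInclusion S).op.lanAdjunction (Type u)).unit.naturality f
  have hn2 := ((wideSubcategoryInclusion S).op.lanAdjunction (Type u)).unit.naturality g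
  simp only [Functor.comp_map] at hn1 hn2
  rw [h] at hn1
  have key := hn1.trans hn2.symm
  have h2 := types_congr_hom (NatTrans.congr_app key B) x
  exact h2
end

section
/- Let ι : S ↪ T be the inclusion of a wide subcategory with S left-cancellable and containing all isomorphisms. Then for every morphism f : X → Y of presheaves on S, the naturality square of the unit η of the adjunction ι_! ⊣ ι* (with vertical maps η_X : X → ι*ι_!X and η_Y : Y → ι*ι_!Y, horizontal maps f and ι*ι_!f) is a pullback square in PSh(S). -/
open CategoryTheory CategoryTheory.Limits
universe u v w

lemma aux_pointwise {K : Type*} {C : Type*} [Category K] [Category C]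
    {P X Y Z : K ⥤ C} {fst : P ⟶ X} {snd : P ⟶ Y} {f : X ⟶ Z} {g : Y ⟶ Z}
    (comm : fst ≫ f = snd ≫ g)
    (h : ∀ k, IsPullback (fst.app k) (snd.app k) (f.app k) (g.app k)) :
    IsPullback fst snd f g := by
  refine IsPullback.of_isLimit' ⟨comm⟩ ?_
  refine evaluationJointlyReflectsLimits _ (fun k => ?_)
  exact (isLimitMapConePullbackConeEquiv ((evaluation K C).obj k) comm).symm (h k).isLimit

lemma aux_types {P X Y Z : Type u} (fst : P ⟶ X) (snd : P ⟶ Y) (f : X ⟶ Z) (g : Y ⟶ Z)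
    (comm : ∀ p, f (fst p) = g (snd p))
    (ex : ∀ x y, f x = g y → ∃! p, fst p = x ∧ snd p = y) :
    IsPullback (C := Type u) fst snd f g := by
  refine IsPullback.of_isLimit' ⟨ConcreteCategory.hom_ext _ _ comm⟩ ?_
  apply (PullbackCone.isLimitEquivBijective _).symm.toFun
  constructor
  · intro p q hpq
    obtain ⟨p₀, -, hu⟩ := ex (fst p) (snd p) (comm p)
    have h1 : fst p = fst q := congrArg (fun t => t.1.1) hpq
    have h2 : snd p = snd q := congrArg (fun t => t.1.2) hpq
    rw [hu p ⟨rfl, rfl⟩, hu q ⟨h1.symm, h2.symm⟩]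
  · rintro ⟨⟨x, y⟩, hxy⟩
    obtain ⟨p, ⟨h1, h2⟩, -⟩ := ex x y hxy
    exact ⟨p, Subtype.ext (Prod.ext h1 h2)⟩

section Aux2
variable {T : Type u} [SmallCategory T] (S : MorphismProperty T) [S.IsMultiplicative]

abbrev auxL : (WideSubcategory S)ᵒᵖ ⥤ Tᵒᵖ := (wideSubcategoryInclusion S).op

variable {A : (WideSubcategory S)ᵒᵖ}

def auxGood (j : CostructuredArrow (auxL S) ((auxL S).obj A)) : Prop := S j.hom.unop

def auxHomOf {j : CostructuredArrow (auxL S) ((auxL S).obj A)} (h : auxGood S j) :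
    j.left ⟶ A :=
  Quiver.Hom.op (⟨j.hom.unop, h⟩ : A.unop ⟶ j.left.unop)

variable (A)

abbrev auxDiag (Z : (WideSubcategory S)ᵒᵖ ⥤ Type u) :
    CostructuredArrow (auxL S) ((auxL S).obj A) ⥤ Type u :=
  CostructuredArrow.proj (auxL S) ((auxL S).obj A) ⋙ Z

abbrev auxJ0 : CostructuredArrow (auxL S) ((auxL S).obj A) :=
  CostructuredArrow.mk (𝟙 ((auxL S).obj A))

lemma auxGood_j0 : auxGood S (auxJ0 S A) := S.id_mem _

lemma auxHomOf_j0 : auxHomOf S (auxGood_j0 S A) = 𝟙 A :=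
  Quiver.Hom.unop_inj (WideSubcategory.hom_ext S rfl)

variable {A}

open Classical in
noncomputable def auxVal (Z : (WideSubcategory S)ᵒᵖ ⥤ Type u)
    (j : CostructuredArrow (auxL S) ((auxL S).obj A)) (z : Z.obj j.left) :
    Option (Z.obj A) :=
  if h : auxGood S j then some (Z.map (auxHomOf S h) z) else none

lemma auxHomOf_comp {j j' : CostructuredArrow (auxL S) ((auxL S).obj A)} (t : j ⟶ j')
    (h : auxGood S j) (h' : auxGood S j') :
    t.left ≫ auxHomOf S h' = auxHomOf S h := by
  apply Quiver.Hom.unop_inj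
  apply WideSubcategory.hom_ext
  have hw := congrArg Quiver.Hom.unop (CostructuredArrow.w t)
  exact hw

lemma auxGood_of {j j' : CostructuredArrow (auxL S) ((auxL S).obj A)} (t : j ⟶ j')
    (hcancel : ∀ {X Y Z : T} (f : X ⟶ Y) (g : Y ⟶ Z), S g → S (f ≫ g) → S f)
    (h : auxGood S j) : auxGood S j' := by
  have hw : j.hom.unop = j'.hom.unop ≫ t.left.unop.1 := by
    rw [← CostructuredArrow.w t]; rfl
  refine hcancel j'.hom.unop (t.left.unop.1) t.left.unop.2 ?_
  rw [← hw]; exact h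

lemma auxGood_to {j j' : CostructuredArrow (auxL S) ((auxL S).obj A)} (t : j ⟶ j')
    (h : auxGood S j') : auxGood S j := by
  have hw : j.hom.unop = j'.hom.unop ≫ t.left.unop.1 := by
    rw [← CostructuredArrow.w t]; rfl
  show S j.hom.unop
  rw [hw]; exact S.comp_mem _ _ h t.left.unop.2

noncomputable def auxCocone (hcancel : ∀ {X Y Z : T} (f : X ⟶ Y) (g : Y ⟶ Z), S g → S (f ≫ g) → S f) (Z : (WideSubcategory S)ᵒᵖ ⥤ Type u) :
    Cocone (auxDiag S A Z) where
  pt := Option (Z.obj A)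
  ι :=
    { app := fun j => TypeCat.ofHom (fun z => auxVal S Z j z)
      naturality := fun j j' t => ConcreteCategory.hom_ext _ _ fun z => by
        show auxVal S Z j' (Z.map t.left z) = auxVal S Z j z
        by_cases h : auxGood S j
        · unfold auxVal; rw [dif_pos h, dif_pos (auxGood_of S t @hcancel h)]
          erw [← FunctorToTypes.map_comp_apply]; rw [auxHomOf_comp]
        · unfold auxVal; rw [dif_neg h, dif_neg (fun h' => h (auxGood_to S t h'))] }

noncomputable def auxDesc (hcancel : ∀ {X Y Z : T} (f : X ⟶ Y) (g : Y ⟶ Z), S g → S (f ≫ g) → S f) (Z : (WideSubcategory S)ᵒᵖ ⥤ Type u) :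
    colimit (auxDiag S A Z) → Option (Z.obj A) :=
  fun x => colimit.desc (auxDiag S A Z) (auxCocone S @hcancel Z) x

lemma auxDesc_ι (hcancel : ∀ {X Y Z : T} (f : X ⟶ Y) (g : Y ⟶ Z), S g → S (f ≫ g) → S f) (Z : (WideSubcategory S)ᵒᵖ ⥤ Type u)
    (j : CostructuredArrow (auxL S) ((auxL S).obj A)) (z : Z.obj j.left) :
    auxDesc S @hcancel Z (colimit.ι (auxDiag S A Z) j z) = auxVal S Z j z :=
  types_congr_hom (colimit.ι_desc (auxCocone S @hcancel Z) j) z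

lemma auxVal_j0 (Z : (WideSubcategory S)ᵒᵖ ⥤ Type u) (z : Z.obj A) :
    auxVal S Z (auxJ0 S A) z = some z := by
  rw [auxVal, dif_pos (auxGood_j0 S A), auxHomOf_j0]
  simp

lemma aux_inj (hcancel : ∀ {X Y Z : T} (f : X ⟶ Y) (g : Y ⟶ Z), S g → S (f ≫ g) → S f) (Z : (WideSubcategory S)ᵒᵖ ⥤ Type u) {z z' : Z.obj A}
    (h : colimit.ι (auxDiag S A Z) (auxJ0 S A) z = colimit.ι (auxDiag S A Z) (auxJ0 S A) z') :
    z = z' := by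
  have := congrArg (auxDesc S @hcancel Z) h
  rw [auxDesc_ι, auxDesc_ι, auxVal_j0, auxVal_j0] at this
  exact Option.some.inj this

lemma aux_extract (hcancel : ∀ {X Y Z : T} (f : X ⟶ Y) (g : Y ⟶ Z), S g → S (f ≫ g) → S f) (Z : (WideSubcategory S)ᵒᵖ ⥤ Type u)
    {j : CostructuredArrow (auxL S) ((auxL S).obj A)} {z : Z.obj j.left} {w : Z.obj A}
    (h : colimit.ι (auxDiag S A Z) j z = colimit.ι (auxDiag S A Z) (auxJ0 S A) w) :
    ∃ hg : auxGood S j, Z.map (auxHomOf S hg) z = w := by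
  have hd := congrArg (auxDesc S @hcancel Z) h
  rw [auxDesc_ι, auxDesc_ι, auxVal_j0, auxVal] at hd
  split_ifs at hd with hg
  exact ⟨hg, Option.some.inj hd⟩

lemma aux_shift (Z : (WideSubcategory S)ᵒᵖ ⥤ Type u)
    {j : CostructuredArrow (auxL S) ((auxL S).obj A)} (hg : auxGood S j) (z : Z.obj j.left) :
    colimit.ι (auxDiag S A Z) j z =
      colimit.ι (auxDiag S A Z) (auxJ0 S A) (Z.map (auxHomOf S hg) z) := by
  have hmk : (auxL S).map (auxHomOf S hg) ≫ (auxJ0 S A).hom = j.hom := by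
    rw [CostructuredArrow.mk_hom_eq_self, Category.comp_id]; rfl
  exact (colimit.w_apply (auxDiag S A Z) ((CostructuredArrow.homMk (auxHomOf S hg) hmk : j ⟶ auxJ0 S A)) z).symm

lemma aux_unit_eq (Z : (WideSubcategory S)ᵒᵖ ⥤ Type u) (z : Z.obj A) :
    ((auxL S).leftKanExtensionObjIsoColimit Z ((auxL S).obj A)).hom
        ((((auxL S).lanAdjunction (Type u)).unit.app Z).app A z) =
      colimit.ι (auxDiag S A Z) (auxJ0 S A) z := by
  rw [Functor.lanAdjunction_unit]
  exact types_congr_hom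
    ((auxL S).leftKanExtensionUnit_leftKanExtensionObjIsoColimit_hom Z A) z

lemma aux_map_eq {X Y : (WideSubcategory S)ᵒᵖ ⥤ Type u} (f : X ⟶ Y)
    (j : CostructuredArrow (auxL S) ((auxL S).obj A)) (x : X.obj j.left) :
    ((auxL S).lan.map f).app ((auxL S).obj A)
        (((auxL S).leftKanExtensionObjIsoColimit X ((auxL S).obj A)).inv
          (colimit.ι (auxDiag S A X) j x)) =
      ((auxL S).leftKanExtensionObjIsoColimit Y ((auxL S).obj A)).inv
        (colimit.ι (auxDiag S A Y) j (f.app j.left x)) := by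
  have h1 := types_congr_hom ((auxL S).ι_leftKanExtensionObjIsoColimit_inv X ((auxL S).obj A) j) x
  have h2 := types_congr_hom ((auxL S).ι_leftKanExtensionObjIsoColimit_inv Y ((auxL S).obj A) j)
    (f.app j.left x)
  have h3 := types_congr_hom (((auxL S).lan.map f).naturality j.hom)
    (((auxL S).lanUnit.app X).app j.left x)
  have h4 := types_congr_hom (NatTrans.congr_app ((auxL S).lanUnit.naturality f) j.left) x
  simp only [types_comp_apply] at h1 h2 h3
  simp only [NatTrans.comp_app, Functor.comp_map, Functor.id_map, Functor.whiskeringLeft_obj_map,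
    Functor.whiskerLeft_app, types_comp_apply] at h4
  erw [h1, h2]
  exact h3.trans (congrArg (((auxL S).lan.obj Y).map j.hom) h4.symm)
end Aux2

/-- Let `ι : S ↪ T` be the inclusion of a left-cancellable wide subcategory containing
all isomorphisms.  Then for every morphism `f : X ⟶ Y` of presheaves on `S`, the
naturality square of the unit of the adjunction `ι_! ⊣ ι*` is a pullback square in
`PSh(S)`. -/
theorem stmt_17 {T : Type u} [SmallCategory T] (S : MorphismProperty T) [S.IsMultiplicative]
    (hiso : ∀ {X Y : T} (f : X ⟶ Y), IsIso f → S f)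
    (hcancel : ∀ {X Y Z : T} (f : X ⟶ Y) (g : Y ⟶ Z), S g → S (f ≫ g) → S f)
    {X Y : (WideSubcategory S)ᵒᵖ ⥤ Type u} (f : X ⟶ Y) :
    IsPullback f
      (((wideSubcategoryInclusion S).op.lanAdjunction (Type u)).unit.app X)
      (((wideSubcategoryInclusion S).op.lanAdjunction (Type u)).unit.app Y)
      (((Functor.whiskeringLeft (WideSubcategory S)ᵒᵖ Tᵒᵖ (Type u)).obj
          (wideSubcategoryInclusion S).op).map
        ((wideSubcategoryInclusion S).op.lan.map f)) := by
  classical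
  have comm : f ≫ ((auxL S).lanAdjunction (Type u)).unit.app Y =
      ((auxL S).lanAdjunction (Type u)).unit.app X ≫
        ((Functor.whiskeringLeft (WideSubcategory S)ᵒᵖ Tᵒᵖ (Type u)).obj (auxL S)).map
          ((auxL S).lan.map f) := by
    rw [Functor.lanAdjunction_unit]
    exact ((auxL S).lanUnit.naturality f)
  refine aux_pointwise comm (fun A => ?_)
  refine aux_types _ _ _ _ (fun p => types_congr_hom (NatTrans.congr_app comm A) p) ?_
  intro y ξ hyξ
  simp only [Functor.whiskeringLeft_obj_map, Functor.whiskerLeft_app] at hyξ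
  set EX := (auxL S).leftKanExtensionObjIsoColimit X ((auxL S).obj A) with hEX
  set EY := (auxL S).leftKanExtensionObjIsoColimit Y ((auxL S).obj A) with hEY
  obtain ⟨j, x, hx⟩ := Types.jointly_surjective' (EX.hom ξ)
  have hξ : ξ = EX.inv (colimit.ι (auxDiag S A X) j x) := by
    rw [hx]
    exact (types_congr_hom EX.hom_inv_id ξ).symm
  have hkey : colimit.ι (auxDiag S A Y) j (f.app j.left x) =
      colimit.ι (auxDiag S A Y) (auxJ0 S A) y := by
    calc colimit.ι (auxDiag S A Y) j (f.app j.left x)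
        = EY.hom (EY.inv (colimit.ι (auxDiag S A Y) j (f.app j.left x))) :=
          (Iso.inv_hom_id_apply EY _).symm
      _ = EY.hom (((auxL S).lan.map f).app ((auxL S).obj A)
            (EX.inv (colimit.ι (auxDiag S A X) j x))) := by
          rw [aux_map_eq S f j x]
      _ = EY.hom (((auxL S).lan.map f).app ((auxL S).obj A) ξ) := by rw [← hξ]
      _ = EY.hom ((((auxL S).lanAdjunction (Type u)).unit.app Y).app A y) := by rw [← hyξ]
      _ = colimit.ι (auxDiag S A Y) (auxJ0 S A) y := aux_unit_eq S Y y
  obtain ⟨hg, hmap⟩ := aux_extract S @hcancel Y hkey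
  have hunit : ∀ z : X.obj A,
      EX.hom ((((auxL S).lanAdjunction (Type u)).unit.app X).app A z) =
        colimit.ι (auxDiag S A X) (auxJ0 S A) z := fun z => aux_unit_eq S X z
  have h5 : EX.hom ((((auxL S).lanAdjunction (Type u)).unit.app X).app A
      (X.map (auxHomOf S hg) x)) = EX.hom ξ := by
    rw [hunit, ← aux_shift S X hg x, hx]
  refine ⟨X.map (auxHomOf S hg) x, ⟨?_, ?_⟩, ?_⟩
  · erw [FunctorToTypes.naturality]
    exact hmap
  · have h6 := congrArg EX.inv h5
    exact ((types_congr_hom EX.hom_inv_id _).symm.trans h6).trans (types_congr_hom EX.hom_inv_id ξ)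
  · rintro x' ⟨hf', hu'⟩
    refine aux_inj S @hcancel X ?_
    rw [← hunit x', ← hunit (X.map (auxHomOf S hg) x), hu', h5]
end
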